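/- Let B be a separable Banach space and X₁,...,X_m independent B-valued random vectors with E‖X_j‖² < ∞. Setting S_m = X₁ + ... + X_m, one has E| ‖S_m‖ − E‖S_m‖ |² ≤ 4 Σ_{j=1}^m E‖X_j‖². -/

import Mathlib

open MeasureTheory ProbabilityTheory

section aux

variable {α : Type*} [MeasurableSpace α]

lemma bias_variance (μ : Measure α) [IsProbabilityMeasure μ] {h : α → ℝ}
    (hh : MemLp h 2 μ) (a : ℝ) :
    ∫ x, (h x - a) ^ 2 ∂μ
      = ∫ x, (h x - ∫ x', h x' ∂μ) ^ 2 ∂μ + ((∫ x', h x' ∂μ) - a) ^ 2 := by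
  set c := ∫ x', h x' ∂μ with hc
  have hint : Integrable h μ := hh.integrable one_le_two
  have hsub : MemLp (fun x => h x - c) 2 μ := hh.sub (memLp_const c)
  have hint1 : Integrable (fun x => (h x - c) ^ 2) μ :=
    (memLp_two_iff_integrable_sq hsub.aestronglyMeasurable).1 hsub
  have hint2 : Integrable (fun x => h x - c) μ := hint.sub (integrable_const c)
  have hzero : ∫ x, (h x - c) ∂μ = 0 := by
    rw [integral_sub hint (integrable_const c), integral_const, probReal_univ]
    simp [hc]
  have hid : ∀ x, (h x - a) ^ 2 = (h x - c) ^ 2 + ((2 * (c - a)) * (h x - c) + (c - a) ^ 2) :=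
    fun x => by ring
  calc ∫ x, (h x - a) ^ 2 ∂μ
      = ∫ x, ((h x - c) ^ 2 + ((2 * (c - a)) * (h x - c) + (c - a) ^ 2)) ∂μ := by
        simp_rw [hid]
    _ = (∫ x, (h x - c) ^ 2 ∂μ) + ∫ x, ((2 * (c - a)) * (h x - c) + (c - a) ^ 2) ∂μ :=
        integral_add hint1 ((hint2.const_mul _).add (integrable_const _))
    _ = (∫ x, (h x - c) ^ 2 ∂μ) + ((2 * (c - a)) * ∫ x, (h x - c) ∂μ + (c - a) ^ 2) := by
        rw [integral_add (hint2.const_mul _) (integrable_const _), integral_const_mul,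
          integral_const, probReal_univ]
        simp
    _ = (∫ x, (h x - c) ^ 2 ∂μ) + (c - a) ^ 2 := by rw [hzero]; ring

variable {B : Type*} [NormedAddCommGroup B] [MeasurableSpace B] [BorelSpace B]
  [SecondCountableTopology B]

lemma step_meas (μ ν : Measure B) [IsProbabilityMeasure μ] [IsProbabilityMeasure ν]
    (hμ2 : MemLp (id : B → B) 2 μ) (hν2 : MemLp (id : B → B) 2 ν) (K : ℝ)
    (hK : ∀ x : B, ∫ y, (‖x + y‖ - ∫ y', ‖x + y'‖ ∂μ) ^ 2 ∂μ ≤ K) (x₀ : B) :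
    ∫ p : B × B, (‖x₀ + p.2 + p.1‖ - ∫ q : B × B, ‖x₀ + q.2 + q.1‖ ∂(ν.prod μ)) ^ 2 ∂(ν.prod μ)
      ≤ K + ∫ z, ‖z‖ ^ 2 ∂ν := by
  set f : B × B → ℝ := fun p => ‖x₀ + p.2 + p.1‖ with hf
  have hfm : Measurable f := ((measurable_const.add measurable_snd).add measurable_fst).norm
  have hμn : MemLp (fun y : B => ‖y‖) 2 μ := hμ2.norm
  have hνn : MemLp (fun z : B => ‖z‖) 2 ν := hν2.norm
  -- MemLp of coordinate norms on the product
  have hmap1 : (ν.prod μ).map Prod.fst = ν := by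
    rw [Measure.map_fst_prod]; simp
  have hmap2 : (ν.prod μ).map Prod.snd = μ := by
    rw [Measure.map_snd_prod]; simp
  have h1 : MemLp (fun p : B × B => ‖p.1‖) 2 (ν.prod μ) := by
    have := (memLp_map_measure_iff measurable_norm.aestronglyMeasurable
      measurable_fst.aemeasurable).1 (hmap1 ▸ hνn)
    exact this
  have h2 : MemLp (fun p : B × B => ‖p.2‖) 2 (ν.prod μ) := by
    have := (memLp_map_measure_iff measurable_norm.aestronglyMeasurable
      measurable_snd.aemeasurable).1 (hmap2 ▸ hμn)
    exact this
  have hf2 : MemLp f 2 (ν.prod μ) := by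
    refine MemLp.of_le (((memLp_const ‖x₀‖).add h1).add h2) hfm.aestronglyMeasurable
      (ae_of_all _ fun p => ?_)
    have h3 : f p ≤ ‖x₀‖ + ‖p.2‖ + ‖p.1‖ := norm_add₃_le
    have h4 : (0:ℝ) ≤ ‖x₀‖ + ‖p.1‖ + ‖p.2‖ := by positivity
    simp only [Pi.add_apply]
    rw [Real.norm_eq_abs, Real.norm_eq_abs, abs_of_nonneg (norm_nonneg _), abs_of_nonneg h4]
    linarith
  set c : ℝ := ∫ q : B × B, f q ∂(ν.prod μ) with hcdef
  have hfint : Integrable f (ν.prod μ) := hf2.integrable one_le_two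
  have hfc2 : MemLp (fun p => f p - c) 2 (ν.prod μ) := hf2.sub (memLp_const c)
  have hintsq : Integrable (fun p => (f p - c) ^ 2) (ν.prod μ) :=
    (memLp_two_iff_integrable_sq hfc2.aestronglyMeasurable).1 hfc2
  set g : B → ℝ := fun z => ∫ y, f (z, y) ∂μ with hgdef
  -- each slice is in L²
  have hzmeas : ∀ z : B, Measurable (fun y => f (z, y)) := fun z =>
    ((measurable_const.add measurable_id).add measurable_const).norm
  have hz2 : ∀ z : B, MemLp (fun y => f (z, y)) 2 μ := by
    intro z
    refine MemLp.of_le ((memLp_const ‖x₀ + z‖).add hμn) (hzmeas z).aestronglyMeasurable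
      (ae_of_all _ fun y => ?_)
    have h4 : (0:ℝ) ≤ ‖x₀ + z‖ + ‖y‖ := by positivity
    simp only [Pi.add_apply]
    rw [Real.norm_eq_abs, Real.norm_eq_abs, abs_of_nonneg (norm_nonneg _), abs_of_nonneg h4]
    have h3 : ‖x₀ + y + z‖ ≤ ‖x₀ + z‖ + ‖y‖ := by
      rw [add_right_comm]; exact norm_add_le _ _
    simpa using h3
  have hzint : ∀ z : B, Integrable (fun y => f (z, y)) μ := fun z =>
    (hz2 z).integrable one_le_two
  -- inner bias-variance decomposition
  have hinner : ∀ z : B, ∫ y, (f (z, y) - c) ^ 2 ∂μ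
      = (∫ y, (f (z, y) - g z) ^ 2 ∂μ) + (g z - c) ^ 2 := fun z =>
    bias_variance μ (hz2 z) c
  -- the conditional variance is at most K
  have hKz : ∀ z : B, ∫ y, (f (z, y) - g z) ^ 2 ∂μ ≤ K := by
    intro z
    have hpt : ∀ y : B, f (z, y) = ‖x₀ + z + y‖ := fun y => by
      simp only [hf]; rw [add_right_comm]
    have hgz : g z = ∫ y', ‖x₀ + z + y'‖ ∂μ := by
      simp only [hgdef]; exact integral_congr_ae (ae_of_all _ fun y => hpt y)
    calc ∫ y, (f (z, y) - g z) ^ 2 ∂μ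
        = ∫ y, (‖x₀ + z + y‖ - ∫ y', ‖x₀ + z + y'‖ ∂μ) ^ 2 ∂μ := by
          rw [hgz]; exact integral_congr_ae (ae_of_all _ fun y => by simp only [hpt])
      _ ≤ K := hK (x₀ + z)
  -- Lipschitz property of g
  have hlip : ∀ z : B, |g z - g 0| ≤ ‖z‖ := by
    intro z
    have hsub : g z - g 0 = ∫ y, (f (z, y) - f (0, y)) ∂μ :=
      (integral_sub (hzint z) (hzint 0)).symm
    have h5 : |∫ y, (f (z, y) - f (0, y)) ∂μ| ≤ ∫ y, |f (z, y) - f (0, y)| ∂μ := by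
      simpa [Real.norm_eq_abs] using
        norm_integral_le_integral_norm (fun y => f (z, y) - f (0, y)) (μ := μ)
    have h6 : ∫ y, |f (z, y) - f (0, y)| ∂μ ≤ ∫ _y, ‖z‖ ∂μ := by
      refine integral_mono ((hzint z).sub (hzint 0)).abs (integrable_const _) fun y => ?_
      have h7 : |‖x₀ + y + z‖ - ‖x₀ + y + 0‖| ≤ ‖(x₀ + y + z) - (x₀ + y + 0)‖ :=
        abs_norm_sub_norm_le _ _
      have h8 : (x₀ + y + z) - (x₀ + y + 0) = z := by abel
      simpa [hf, h8] using h7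
    rw [hsub]
    calc |∫ y, (f (z, y) - f (0, y)) ∂μ| ≤ ∫ _y, ‖z‖ ∂μ := le_trans h5 h6
      _ = ‖z‖ := by simp
  -- g is in L²
  have hgm : StronglyMeasurable g := hfm.stronglyMeasurable.integral_prod_right'
  have hg2 : MemLp g 2 ν := by
    refine MemLp.of_le ((memLp_const |g 0|).add hνn) hgm.aestronglyMeasurable
      (ae_of_all _ fun z => ?_)
    have h9 := hlip z
    have h10 : |g z| - |g 0| ≤ |g z - g 0| := by
      have := abs_sub_abs_le_abs_sub (g z) (g 0); linarith
    have h11 : (0:ℝ) ≤ |g 0| + ‖z‖ := by positivity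
    simp only [Pi.add_apply]
    rw [Real.norm_eq_abs, Real.norm_eq_abs, abs_of_nonneg h11]
    linarith
  -- mean of g is c
  have hcg : (∫ z, g z ∂ν) = c := by
    rw [hcdef, integral_prod f hfint]
  -- variance of g is at most second moment of ν
  have hgc2 : MemLp (fun z => g z - c) 2 ν := hg2.sub (memLp_const c)
  have hgc2int : Integrable (fun z => (g z - c) ^ 2) ν :=
    (memLp_two_iff_integrable_sq hgc2.aestronglyMeasurable).1 hgc2
  have hgg0 : MemLp (fun z => g z - g 0) 2 ν := hg2.sub (memLp_const (g 0))
  have hgg0int : Integrable (fun z => (g z - g 0) ^ 2) ν :=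
    (memLp_two_iff_integrable_sq hgg0.aestronglyMeasurable).1 hgg0
  have hν2int : Integrable (fun z => ‖z‖ ^ 2) ν :=
    (memLp_two_iff_integrable_sq_norm hν2.aestronglyMeasurable).1 hν2
  have hvarg : ∫ z, (g z - c) ^ 2 ∂ν ≤ ∫ z, ‖z‖ ^ 2 ∂ν := by
    have hb := bias_variance ν hg2 (g 0)
    rw [hcg] at hb
    have h12 : ∫ z, (g z - c) ^ 2 ∂ν ≤ ∫ z, (g z - g 0) ^ 2 ∂ν := by
      nlinarith [sq_nonneg (c - g 0)]
    have h13 : ∫ z, (g z - g 0) ^ 2 ∂ν ≤ ∫ z, ‖z‖ ^ 2 ∂ν := by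
      refine integral_mono hgg0int hν2int fun z => ?_
      have := hlip z
      have habs := abs_le.1 this
      nlinarith [habs.1, habs.2]
    linarith
  -- Fubini and assembly
  have hG : Integrable (fun z => ∫ y, (f (z, y) - c) ^ 2 ∂μ) ν := hintsq.integral_prod_left
  calc ∫ p : B × B, (f p - c) ^ 2 ∂(ν.prod μ)
      = ∫ z, ∫ y, (f (z, y) - c) ^ 2 ∂μ ∂ν := integral_prod _ hintsq
    _ ≤ ∫ z, (K + (g z - c) ^ 2) ∂ν := by
        refine integral_mono hG ((integrable_const K).add hgc2int) fun z => ?_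
        rw [hinner z]
        have := hKz z
        simp only [Pi.add_apply]
        linarith
    _ = K + ∫ z, (g z - c) ^ 2 ∂ν := by
        rw [integral_add (integrable_const K) hgc2int, integral_const, probReal_univ]
        simp
    _ ≤ K + ∫ z, ‖z‖ ^ 2 ∂ν := by linarith

lemma step_omega {Ω : Type*} [MeasurableSpace Ω] (P : Measure Ω) [IsProbabilityMeasure P]
    (T Z : Ω → B) (hT : Measurable T) (hZ : Measurable Z)
    (hTZ : IndepFun T Z P) (hT2 : MemLp T 2 P) (hZ2 : MemLp Z 2 P) (K : ℝ)
    (hK : ∀ x : B, ∫ ω, (‖x + T ω‖ - ∫ ω', ‖x + T ω'‖ ∂P) ^ 2 ∂P ≤ K) (x₀ : B) :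
    ∫ ω, (‖x₀ + T ω + Z ω‖ - ∫ ω', ‖x₀ + T ω' + Z ω'‖ ∂P) ^ 2 ∂P
      ≤ K + ∫ ω, ‖Z ω‖ ^ 2 ∂P := by
  set μ : Measure B := P.map T with hμdef
  set ν : Measure B := P.map Z with hνdef
  haveI : IsProbabilityMeasure μ := Measure.isProbabilityMeasure_map hT.aemeasurable
  haveI : IsProbabilityMeasure ν := Measure.isProbabilityMeasure_map hZ.aemeasurable
  have hμ2 : MemLp (id : B → B) 2 μ := by
    rw [hμdef]
    exact (memLp_map_measure_iff aestronglyMeasurable_id hT.aemeasurable).2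
      (by simpa [Function.comp] using hT2)
  have hν2 : MemLp (id : B → B) 2 ν := by
    rw [hνdef]
    exact (memLp_map_measure_iff aestronglyMeasurable_id hZ.aemeasurable).2
      (by simpa [Function.comp] using hZ2)
  have hmap : P.map (fun ω => (Z ω, T ω)) = ν.prod μ :=
    (indepFun_iff_map_prod_eq_prod_map_map hZ.aemeasurable hT.aemeasurable).1 hTZ.symm
  have hpair : AEMeasurable (fun ω => (Z ω, T ω)) P := (hZ.prodMk hT).aemeasurable
  have hfm : Measurable (fun p : B × B => ‖x₀ + p.2 + p.1‖) :=
    ((measurable_const.add measurable_snd).add measurable_fst).norm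
  have e1 : ∫ q : B × B, ‖x₀ + q.2 + q.1‖ ∂(ν.prod μ) = ∫ ω', ‖x₀ + T ω' + Z ω'‖ ∂P := by
    rw [← hmap, integral_map hpair hfm.aestronglyMeasurable]
  set c : ℝ := ∫ ω', ‖x₀ + T ω' + Z ω'‖ ∂P with hcdef
  have e2 : ∫ p : B × B, (‖x₀ + p.2 + p.1‖ - c) ^ 2 ∂(ν.prod μ)
      = ∫ ω, (‖x₀ + T ω + Z ω‖ - c) ^ 2 ∂P := by
    rw [← hmap, integral_map (f := fun p : B × B => (‖x₀ + p.2 + p.1‖ - c) ^ 2) hpair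
      ((hfm.sub measurable_const).pow_const 2).aestronglyMeasurable]
  have e3 : ∫ z, ‖z‖ ^ 2 ∂ν = ∫ ω, ‖Z ω‖ ^ 2 ∂P := by
    rw [hνdef, integral_map hZ.aemeasurable (measurable_norm.pow_const 2).aestronglyMeasurable]
  have hKμ : ∀ x : B, ∫ y, (‖x + y‖ - ∫ y', ‖x + y'‖ ∂μ) ^ 2 ∂μ ≤ K := by
    intro x
    have hm1 : Measurable fun y : B => ‖x + y‖ := (measurable_id.const_add x).norm
    have em : ∫ y', ‖x + y'‖ ∂μ = ∫ ω', ‖x + T ω'‖ ∂P := by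
      rw [hμdef, integral_map hT.aemeasurable hm1.aestronglyMeasurable]
    rw [em, hμdef, integral_map (f := fun y : B => (‖x + y‖ - ∫ ω', ‖x + T ω'‖ ∂P) ^ 2) hT.aemeasurable
      ((hm1.sub measurable_const).pow_const 2).aestronglyMeasurable]
    exact hK x
  have := step_meas μ ν hμ2 hν2 K hKμ x₀
  rw [e1, e2] at this
  calc ∫ ω, (‖x₀ + T ω + Z ω‖ - c) ^ 2 ∂P ≤ K + ∫ z, ‖z‖ ^ 2 ∂ν := this
    _ = K + ∫ ω, ‖Z ω‖ ^ 2 ∂P := by rw [e3]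

end aux

/-- for independent `B`-valued random vectors `X₁,…,X_m` with
`E‖X_j‖² < ∞` and `S_m = Σ_j X_j`, one has
`E|‖S_m‖ − E‖S_m‖|² ≤ 4 Σ_j E‖X_j‖²`. -/
theorem stmt4 {Ω : Type*} [MeasurableSpace Ω] (P : Measure Ω) [IsProbabilityMeasure P]
    {B : Type*} [NormedAddCommGroup B] [MeasurableSpace B] [BorelSpace B]
    (hsep : TopologicalSpace.SeparableSpace B)
    (m : ℕ) (X : Fin m → Ω → B)
    (hmeas : ∀ j, Measurable (X j))
    (hindep : iIndepFun X P)
    (hL2 : ∀ j, Integrable (fun ω => ‖X j ω‖ ^ 2) P)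
    (S : Ω → B) (hS : ∀ ω, S ω = ∑ j, X j ω) :
    (∫ ω, (‖S ω‖ - ∫ ω', ‖S ω'‖ ∂P) ^ 2 ∂P) ≤
      4 * ∑ j, ∫ ω, ‖X j ω‖ ^ 2 ∂P := by
  haveI := hsep
  haveI : SecondCountableTopology B := UniformSpace.secondCountable_of_separable B
  have hX2 : ∀ j, MemLp (X j) 2 P := fun j =>
    (memLp_two_iff_integrable_sq_norm (hmeas j).aestronglyMeasurable).2 (hL2 j)
  have key : ∀ s : Finset (Fin m), ∀ x₀ : B,
      ∫ ω, (‖x₀ + ∑ j ∈ s, X j ω‖ - ∫ ω', ‖x₀ + ∑ j ∈ s, X j ω'‖ ∂P) ^ 2 ∂P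
        ≤ ∑ j ∈ s, ∫ ω, ‖X j ω‖ ^ 2 ∂P := by
    intro s
    induction s using Finset.induction_on with
    | empty =>
      intro x₀
      simp
    | @insert i s hi ih =>
      intro x₀
      have hT2 : MemLp (fun ω => ∑ j ∈ s, X j ω) 2 P :=
        memLp_finset_sum s fun j _ => hX2 j
      have hTm : Measurable (fun ω => ∑ j ∈ s, X j ω) :=
        Finset.measurable_sum s fun j _ => hmeas j
      have hind : IndepFun (fun ω => ∑ j ∈ s, X j ω) (X i) P := by
        have h := hindep.indepFun_finsetSum_of_notMem hmeas hi
        have he : (∑ j ∈ s, X j) = fun ω => ∑ j ∈ s, X j ω :=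
          funext fun ω => Finset.sum_apply ω s X
        rwa [he] at h
      have hstep := step_omega P (fun ω => ∑ j ∈ s, X j ω) (X i) hTm (hmeas i) hind hT2
        (hX2 i) (∑ j ∈ s, ∫ ω, ‖X j ω‖ ^ 2 ∂P) ih x₀
      have hpt : ∀ ω, ‖x₀ + ∑ j ∈ insert i s, X j ω‖
          = ‖x₀ + (∑ j ∈ s, X j ω) + X i ω‖ := fun ω => by
        rw [Finset.sum_insert hi, add_comm (X i ω), ← add_assoc]
      simp_rw [hpt]
      rw [Finset.sum_insert hi]
      linarith [hstep]
  have h0 := key Finset.univ 0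
  simp only [zero_add] at h0
  have hnonneg : (0:ℝ) ≤ ∑ j, ∫ ω, ‖X j ω‖ ^ 2 ∂P :=
    Finset.sum_nonneg fun j _ => integral_nonneg fun ω => by positivity
  calc ∫ ω, (‖S ω‖ - ∫ ω', ‖S ω'‖ ∂P) ^ 2 ∂P
      = ∫ ω, (‖∑ j, X j ω‖ - ∫ ω', ‖∑ j, X j ω'‖ ∂P) ^ 2 ∂P := by
        simp_rw [hS]
    _ ≤ ∑ j, ∫ ω, ‖X j ω‖ ^ 2 ∂P := h0
    _ ≤ 4 * ∑ j, ∫ ω, ‖X j ω‖ ^ 2 ∂P := by linarith
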